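/- Let a, b > 0 and define f : ℝ²∖{0} → ℝ by f(x,y) = a·x + b·x/(x²+y²). Then f has exactly two critical points, located at (√(b/a), 0) and (−√(b/a), 0), and at each of these points the Hessian of f is invertible with negative determinant (a nondegenerate saddle). -/

import Mathlib

set_option autoImplicit false

open Matrix

lemma hderiv_x (a b x y : ℝ) (h : x ^ 2 + y ^ 2 ≠ 0) :
    HasDerivAt (fun x' : ℝ => a * x' + b * x' / (x' ^ 2 + y ^ 2))
      (a + b * (y ^ 2 - x ^ 2) / (x ^ 2 + y ^ 2) ^ 2) x := by
  have h1 : HasDerivAt (fun x' : ℝ => x' ^ 2 + y ^ 2) (2 * x) x := by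
    simpa using (hasDerivAt_pow 2 x).add_const (y ^ 2)
  have h2 : HasDerivAt (fun x' : ℝ => b * x') b x := by
    simpa using (hasDerivAt_id x).const_mul b
  have h4 : HasDerivAt (fun x' : ℝ => a * x') a x := by
    simpa using (hasDerivAt_id x).const_mul a
  have h5 := h4.add (h2.div h1 h)
  simp only [Pi.div_def, Pi.add_def] at h5
  exact h5.congr_deriv (by ring)

lemma hderiv_y (a b x y : ℝ) (h : x ^ 2 + y ^ 2 ≠ 0) :
    HasDerivAt (fun y' : ℝ => a * x + b * x / (x ^ 2 + y' ^ 2))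
      (-(2 * b * x * y) / (x ^ 2 + y ^ 2) ^ 2) y := by
  have h1 : HasDerivAt (fun y' : ℝ => x ^ 2 + y' ^ 2) (2 * y) y := by
    simpa using (hasDerivAt_pow 2 y).const_add (x ^ 2)
  have h5 := (hasDerivAt_const y (a * x)).add ((hasDerivAt_const y (b * x)).div h1 h)
  simp only [Pi.div_def, Pi.add_def] at h5
  exact h5.congr_deriv (by ring)

lemma second_xx (a b x : ℝ) (hx : x ≠ 0) :
    deriv (fun x' : ℝ => deriv (fun x'' : ℝ =>
      a * x'' + b * x'' / (x'' ^ 2 + (0:ℝ) ^ 2)) x') x = 2 * b / x ^ 3 := by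
  have hev : (fun x' : ℝ => deriv (fun x'' : ℝ =>
      a * x'' + b * x'' / (x'' ^ 2 + (0:ℝ) ^ 2)) x')
      =ᶠ[nhds x] fun x' : ℝ => a + b * ((0:ℝ) ^ 2 - x' ^ 2) / (x' ^ 2 + (0:ℝ) ^ 2) ^ 2 := by
    filter_upwards [eventually_ne_nhds hx] with x' hx'
    exact (hderiv_x a b x' 0 (by positivity)).deriv
  rw [hev.deriv_eq]
  have h1 : HasDerivAt (fun x' : ℝ => x' ^ 2 + (0:ℝ) ^ 2) (2 * x) x := by
    have := (hasDerivAt_pow 2 x).add_const ((0:ℝ) ^ 2)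
    exact this.congr_deriv (by norm_num)
  have hv : HasDerivAt (fun x' : ℝ => (x' ^ 2 + (0:ℝ) ^ 2) ^ 2)
      (2 * (x ^ 2 + (0:ℝ) ^ 2) ^ 1 * (2 * x)) x := h1.pow 2
  have hu : HasDerivAt (fun x' : ℝ => b * ((0:ℝ) ^ 2 - x' ^ 2)) (b * (0 - 2 * x)) x := by
    have : HasDerivAt (fun x' : ℝ => (0:ℝ) ^ 2 - x' ^ 2) (0 - 2 * x) x := by
      have h := (hasDerivAt_pow 2 x).const_sub ((0:ℝ) ^ 2)
      exact h.congr_deriv (by norm_num)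
    exact this.const_mul b
  have hd := ((hu.div hv (by positivity)).const_add a)
  simp only [Pi.div_def] at hd
  rw [hd.deriv]
  field_simp
  ring

lemma second_xy (a b x : ℝ) (hx : x ≠ 0) :
    deriv (fun x' : ℝ => deriv (fun y' : ℝ =>
      a * x' + b * x' / (x' ^ 2 + y' ^ 2)) 0) x = 0 := by
  have hev : (fun x' : ℝ => deriv (fun y' : ℝ =>
      a * x' + b * x' / (x' ^ 2 + y' ^ 2)) 0) =ᶠ[nhds x] fun _ : ℝ => (0:ℝ) := by
    filter_upwards [eventually_ne_nhds hx] with x' hx'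
    have := (hderiv_y a b x' 0 (by positivity)).deriv
    simpa using this
  rw [hev.deriv_eq, deriv_const]

lemma second_yx (a b x : ℝ) (hx : x ≠ 0) :
    deriv (fun y' : ℝ => deriv (fun x' : ℝ =>
      a * x' + b * x' / (x' ^ 2 + y' ^ 2)) x) 0 = 0 := by
  have hfe : (fun y' : ℝ => deriv (fun x' : ℝ =>
      a * x' + b * x' / (x' ^ 2 + y' ^ 2)) x)
      = fun y' : ℝ => a + b * (y' ^ 2 - x ^ 2) / (x ^ 2 + y' ^ 2) ^ 2 := by
    funext y'
    exact (hderiv_x a b x y' (by positivity)).deriv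
  rw [hfe]
  have h1 : HasDerivAt (fun y' : ℝ => x ^ 2 + y' ^ 2) (2 * 0) (0:ℝ) := by
    simpa using (hasDerivAt_pow 2 (0:ℝ)).const_add (x ^ 2)
  have hv : HasDerivAt (fun y' : ℝ => (x ^ 2 + y' ^ 2) ^ 2)
      (2 * (x ^ 2 + (0:ℝ) ^ 2) ^ 1 * (2 * 0)) 0 := by simpa [Pi.pow_def] using h1.pow 2
  have hu : HasDerivAt (fun y' : ℝ => b * (y' ^ 2 - x ^ 2)) (b * (2 * 0)) (0:ℝ) := by
    have : HasDerivAt (fun y' : ℝ => y' ^ 2 - x ^ 2) (2 * 0) (0:ℝ) := by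
      simpa using (hasDerivAt_pow 2 (0:ℝ)).sub_const (x ^ 2)
    exact this.const_mul b
  have hd := ((hu.div hv (by positivity)).const_add a)
  simp only [Pi.div_def] at hd
  rw [hd.deriv]
  simp

lemma second_yy (a b x : ℝ) (hx : x ≠ 0) :
    deriv (fun y' : ℝ => deriv (fun y'' : ℝ =>
      a * x + b * x / (x ^ 2 + y'' ^ 2)) y') 0 = -(2 * b) / x ^ 3 := by
  have hfe : (fun y' : ℝ => deriv (fun y'' : ℝ =>
      a * x + b * x / (x ^ 2 + y'' ^ 2)) y')
      = fun y' : ℝ => -(2 * b * x * y') / (x ^ 2 + y' ^ 2) ^ 2 := by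
    funext y'
    exact (hderiv_y a b x y' (by positivity)).deriv
  rw [hfe]
  have h1 : HasDerivAt (fun y' : ℝ => x ^ 2 + y' ^ 2) (2 * 0) (0:ℝ) := by
    simpa using (hasDerivAt_pow 2 (0:ℝ)).const_add (x ^ 2)
  have hv : HasDerivAt (fun y' : ℝ => (x ^ 2 + y' ^ 2) ^ 2)
      (2 * (x ^ 2 + (0:ℝ) ^ 2) ^ 1 * (2 * 0)) 0 := by simpa [Pi.pow_def] using h1.pow 2
  have hu : HasDerivAt (fun y' : ℝ => -(2 * b * x * y')) (-(2 * b * x)) (0:ℝ) := by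
    have : HasDerivAt (fun y' : ℝ => (2 * b * x) * y') (2 * b * x) (0:ℝ) := by
      simpa using (hasDerivAt_id (0:ℝ)).const_mul (2 * b * x)
    simpa [neg_mul, Pi.neg_def] using this.neg
  have hd := hu.div hv (by positivity)
  simp only [Pi.div_def] at hd
  rw [hd.deriv]
  field_simp
  ring

lemma crit_zero (a b x : ℝ) (ha : 0 < a) (hb : 0 < b) (hx : x ≠ 0) (hx2 : x ^ 2 = b / a) :
    deriv (fun x' : ℝ => a * x' + b * x' / (x' ^ 2 + (0:ℝ) ^ 2)) x = 0 ∧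
    deriv (fun y' : ℝ => a * x + b * x / (x ^ 2 + y' ^ 2)) (0:ℝ) = 0 := by
  have hden : x ^ 2 + (0:ℝ) ^ 2 ≠ 0 := by positivity
  constructor
  · rw [(hderiv_x a b x 0 hden).deriv, hx2]
    have ha' := ha.ne'
    have hb' := hb.ne'
    field_simp
    ring
  · rw [(hderiv_y a b x 0 hden).deriv]
    simp


theorem annulus_eigenfunction_critical_points (a b : ℝ) (ha : 0 < a) (hb : 0 < b) :
    (∀ x y : ℝ, (x, y) ≠ ((0 : ℝ), (0 : ℝ)) →
      ((deriv (fun x' : ℝ => a * x' + b * x' / (x' ^ 2 + y ^ 2)) x = 0 ∧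
        deriv (fun y' : ℝ => a * x + b * x / (x ^ 2 + y' ^ 2)) y = 0) ↔
       ((x, y) = (Real.sqrt (b / a), (0 : ℝ)) ∨ (x, y) = (-Real.sqrt (b / a), (0 : ℝ))))) ∧
    (∀ x y : ℝ,
      ((x, y) = (Real.sqrt (b / a), (0 : ℝ)) ∨ (x, y) = (-Real.sqrt (b / a), (0 : ℝ))) →
      (!![deriv (fun x' : ℝ => deriv (fun x'' : ℝ =>
            a * x'' + b * x'' / (x'' ^ 2 + y ^ 2)) x') x,
          deriv (fun x' : ℝ => deriv (fun y' : ℝ =>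
            a * x' + b * x' / (x' ^ 2 + y' ^ 2)) y) x;
          deriv (fun y' : ℝ => deriv (fun x' : ℝ =>
            a * x' + b * x' / (x' ^ 2 + y' ^ 2)) x) y,
          deriv (fun y' : ℝ => deriv (fun y'' : ℝ =>
            a * x + b * x / (x ^ 2 + y'' ^ 2)) y') y] :
        Matrix (Fin 2) (Fin 2) ℝ).det < 0) := by
  have hba : (0:ℝ) < b / a := div_pos hb ha
  have hs : (0:ℝ) < Real.sqrt (b / a) := Real.sqrt_pos.mpr hba
  constructor
  · intro x y hne
    have hden : x ^ 2 + y ^ 2 ≠ 0 := by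
      intro h
      apply hne
      have hx0 : x = 0 := by nlinarith [sq_nonneg x, sq_nonneg y]
      have hy0 : y = 0 := by nlinarith [sq_nonneg x, sq_nonneg y]
      simp [hx0, hy0]
    constructor
    · rintro ⟨hdx, hdy⟩
      rw [(hderiv_x a b x y hden).deriv] at hdx
      rw [(hderiv_y a b x y hden).deriv] at hdy
      have h2 : (x ^ 2 + y ^ 2) ^ 2 ≠ 0 := pow_ne_zero _ hden
      have hxy : x * y = 0 := by
        have h3 : -(2 * b * x * y) = 0 := by
          exact (div_eq_zero_iff.mp hdy).resolve_right h2
        nlinarith [h3]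
      rcases mul_eq_zero.mp hxy with hx0 | hy0
      · exfalso
        subst hx0
        have hy : y ≠ 0 := by rintro rfl; exact hne rfl
        have e : a + b * (y ^ 2 - 0 ^ 2) / (0 ^ 2 + y ^ 2) ^ 2 = a + b / y ^ 2 := by
          field_simp
          ring
        rw [e] at hdx
        have : (0:ℝ) < a + b / y ^ 2 := by positivity
        linarith
      · subst hy0
        have hx : x ≠ 0 := by rintro rfl; exact hne rfl
        have e : a + b * (0 ^ 2 - x ^ 2) / (x ^ 2 + 0 ^ 2) ^ 2 = a - b / x ^ 2 := by
          field_simp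
          ring
        rw [e] at hdx
        have hb' : b / x ^ 2 = a := by linarith
        have hx2 : x ^ 2 = b / a := by
          rw [eq_div_iff ha.ne']
          field_simp at hb'
          linarith
        have habs : Real.sqrt (b / a) = |x| := by
          rw [← hx2, Real.sqrt_sq_eq_abs]
        rcases abs_cases x with ⟨h, _⟩ | ⟨h, _⟩
        · left; rw [Prod.mk.injEq]; exact ⟨by rw [habs, h], rfl⟩
        · right; rw [Prod.mk.injEq]; exact ⟨by rw [habs, h]; ring, rfl⟩
    · rintro (h | h) <;> rw [Prod.mk.injEq] at h <;> obtain ⟨hx, hy⟩ := h <;> subst hx <;> subst hy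
      · exact crit_zero a b _ ha hb hs.ne' (Real.sq_sqrt hba.le)
      · exact crit_zero a b _ ha hb (neg_ne_zero.mpr hs.ne')
          (by rw [neg_pow]; simp [Real.sq_sqrt hba.le])
  · intro x y h
    have hxne : x ≠ 0 ∧ y = 0 := by
      rcases h with h | h <;> rw [Prod.mk.injEq] at h <;> obtain ⟨hx, hy⟩ := h <;> subst hx
      · exact ⟨hs.ne', hy⟩
      · exact ⟨neg_ne_zero.mpr hs.ne', hy⟩
    obtain ⟨hxne, hy⟩ := hxne
    subst hy
    rw [Matrix.det_fin_two_of, second_xx a b x hxne, second_xy a b x hxne,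
      second_yx a b x hxne, second_yy a b x hxne]
    have h6 : (0:ℝ) < x ^ 6 := by positivity
    have e : 2 * b / x ^ 3 * (-(2 * b) / x ^ 3) - 0 * 0 = -(4 * b ^ 2) / x ^ 6 := by
      ring
    rw [e]
    exact div_neg_of_neg_of_pos (by nlinarith [pow_pos hb 2]) h6
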